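/- Under Assumptions (A1)-(A4), for every y < γ_C, every v in the support interval 𝒫 of the propensity score, and every δ > 0 such that y+δ lies in the support of C, the conditional joint probability of the observed outcome and treatment satisfies ℙ[Y ≤ y, D = 1 | P(Z,C) = v, C = y+δ] = ∫₀^v ℙ[Y*(1) ≤ y | C = y+δ, V = u] du (for almost every such conditioning value with respect to the distribution of (P(Z,C), C)). -/

import Mathlib

open MeasureTheory ProbabilityTheory Set
open scoped ENNReal

noncomputable section

/-- `γ_C := inf {c : ℙ[C ≤ c] = 1}`, the least upper bound of the support of the
censoring variable, as an extended nonnegative real. -/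
def gammaSup {Ω : Type*} [MeasurableSpace Ω] (μ : Measure Ω) (C : Ω → ℝ) : ℝ≥0∞ :=
  sInf {c : ℝ≥0∞ | μ {ω | ENNReal.ofReal (C ω) ≤ c} = 1}


section AuxLemmas

variable {Ω : Type*} [MeasurableSpace Ω] [StandardBorelSpace Ω] [Nonempty Ω]
  {μ : Measure Ω} [IsProbabilityMeasure μ]

/-- Disintegration: `μ.map X ⊗ₘ condDistrib Y X μ = μ.map (X, Y)`. -/
lemma aux_map_eq_compProd {β γ : Type*} [MeasurableSpace β] [MeasurableSpace γ]
    [StandardBorelSpace γ] [Nonempty γ]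
    {X : Ω → β} {Y : Ω → γ} (hX : Measurable X) (hY : Measurable Y) :
    μ.map X ⊗ₘ condDistrib Y X μ = μ.map (fun ω => (X ω, Y ω)) := by
  have : IsProbabilityMeasure (μ.map (fun ω => (X ω, Y ω))) :=
    Measure.isProbabilityMeasure_map (hX.prodMk hY).aemeasurable
  rw [condDistrib, ← Measure.fst_map_prodMk (X := X) hY]
  exact Measure.disintegrate _ _

/-- Core computation from conditional independence. -/
lemma aux_indep_core {γ : Type*} [MeasurableSpace γ] [StandardBorelSpace γ] [Nonempty γ]
    {Z C : Ω → ℝ} {W : Ω → γ} (hZ : Measurable Z) (hC : Measurable C) (hW : Measurable W)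
    (hCI : CondIndepFun (MeasurableSpace.comap C inferInstance) hC.comap_le Z W μ)
    {s₁ s₂ : Set ℝ} {B : Set γ}
    (hs₁ : MeasurableSet s₁) (hs₂ : MeasurableSet s₂) (hB : MeasurableSet B) :
    μ ((Z ⁻¹' s₁ ∩ C ⁻¹' s₂) ∩ W ⁻¹' B)
      = ∫⁻ ω in Z ⁻¹' s₁ ∩ C ⁻¹' s₂, condDistrib W C μ (C ω) B ∂μ := by
  have hm := hC.comap_le
  have hZs : MeasurableSet (Z ⁻¹' s₁) := hZ hs₁
  have hCs : MeasurableSet (C ⁻¹' s₂) := hC hs₂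
  have hs₂m : MeasurableSet[MeasurableSpace.comap C inferInstance] (C ⁻¹' s₂) := ⟨s₂, hs₂, rfl⟩
  have hWB : MeasurableSet (W ⁻¹' B) := hW hB
  set E := Z ⁻¹' s₁ ∩ C ⁻¹' s₂ with hE_def
  have hEm : MeasurableSet E := hZs.inter hCs
  have hmeas_k : Measurable fun ω => condDistrib W C μ (C ω) B :=
    (Kernel.measurable_coe _ hB).comp hC
  have hRle : ∫⁻ ω in E, condDistrib W C μ (C ω) B ∂μ ≤ μ E := by
    calc ∫⁻ ω in E, condDistrib W C μ (C ω) B ∂μ ≤ ∫⁻ _ in E, 1 ∂μ :=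
          lintegral_mono fun ω => prob_le_one
      _ = μ E := by rw [setLIntegral_one]
  have hRne : ∫⁻ ω in E, condDistrib W C μ (C ω) B ∂μ ≠ ⊤ :=
    ne_top_of_le_ne_top (measure_ne_top μ E) hRle
  have h1 : (fun ω => (condDistrib W C μ (C ω) B).toReal) =ᵐ[μ] μ⟦W ⁻¹' B | MeasurableSpace.comap C inferInstance⟧ :=
    condDistrib_ae_eq_condExp hC hW hB
  have hCIiff :=
    (condIndepFun_iff_condExp_inter_preimage_eq_mul (μ := μ) (hm' := hC.comap_le) hZ hW).mp
      hCI s₁ B hs₁ hB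
  set g : Ω → ℝ := μ⟦W ⁻¹' B | MeasurableSpace.comap C inferInstance⟧ with hg_def
  set ind : Ω → ℝ := (Z ⁻¹' s₁).indicator (fun _ => (1 : ℝ)) with hind_def
  have hg_int : Integrable g μ := integrable_condExp
  have hind_int : Integrable ind μ := (integrable_const (1 : ℝ)).indicator hZs
  have hgind : g * ind = (Z ⁻¹' s₁).indicator g := by
    funext ω
    by_cases h : ω ∈ Z ⁻¹' s₁ <;> simp [hind_def, h]
  have hprod_int : Integrable (g * ind) μ := by
    rw [hgind]; exact hg_int.indicator hZs
  have hpull : μ[g * ind | MeasurableSpace.comap C inferInstance] =ᵐ[μ] g * μ[ind | MeasurableSpace.comap C inferInstance] :=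
    condExp_mul_of_stronglyMeasurable_left stronglyMeasurable_condExp hprod_int hind_int
  -- real-valued computation
  have hL : (μ (E ∩ W ⁻¹' B)).toReal
      = ∫ ω in C ⁻¹' s₂, (μ⟦Z ⁻¹' s₁ ∩ W ⁻¹' B | MeasurableSpace.comap C inferInstance⟧) ω ∂μ := by
    rw [setIntegral_condExp hm ((integrable_const (1 : ℝ)).indicator (hZs.inter hWB)) hs₂m,
      integral_indicator_const (1 : ℝ) (hZs.inter hWB), measureReal_restrict_apply (hZs.inter hWB),
      smul_eq_mul, mul_one, measureReal_def]
    congr 2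
    ext ω
    simp only [hE_def, mem_inter_iff, mem_preimage]
    tauto
  have hR : (∫⁻ ω in E, condDistrib W C μ (C ω) B ∂μ).toReal
      = ∫ ω in C ⁻¹' s₂, (g * μ⟦Z ⁻¹' s₁ | MeasurableSpace.comap C inferInstance⟧) ω ∂μ := by
    have h2 : (∫⁻ ω in E, condDistrib W C μ (C ω) B ∂μ).toReal
        = ∫ ω in E, (condDistrib W C μ (C ω) B).toReal ∂μ :=
      (integral_toReal (hmeas_k.aemeasurable.restrict)
        (ae_of_all _ fun ω => measure_lt_top _ _)).symm
    rw [h2, integral_congr_ae (ae_restrict_of_ae h1)]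
    have h3 : ∫ ω in E, g ω ∂μ = ∫ ω in C ⁻¹' s₂, (Z ⁻¹' s₁).indicator g ω ∂μ := by
      rw [setIntegral_indicator hZs, inter_comm]
    rw [h3, ← hgind, ← setIntegral_condExp hm hprod_int hs₂m,
      integral_congr_ae (ae_restrict_of_ae hpull)]
  have hLR : ∫ ω in C ⁻¹' s₂, (μ⟦Z ⁻¹' s₁ ∩ W ⁻¹' B | MeasurableSpace.comap C inferInstance⟧) ω ∂μ
      = ∫ ω in C ⁻¹' s₂, (g * μ⟦Z ⁻¹' s₁ | MeasurableSpace.comap C inferInstance⟧) ω ∂μ := by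
    refine integral_congr_ae (ae_restrict_of_ae ?_)
    filter_upwards [hCIiff] with ω hω
    simpa [mul_comm] using hω
  have : (μ (E ∩ W ⁻¹' B)).toReal = (∫⁻ ω in E, condDistrib W C μ (C ω) B ∂μ).toReal := by
    rw [hL, hR, hLR]
  exact (ENNReal.toReal_eq_toReal_iff' (measure_ne_top μ _) hRne).mp this

/-- Conditional independence gives a compProd representation of the joint law of
`((Z, C), W)` in which the kernel only depends on the second coordinate. -/
lemma aux_indep_compProd {γ : Type*} [MeasurableSpace γ] [StandardBorelSpace γ] [Nonempty γ]
    {Z C : Ω → ℝ} {W : Ω → γ} (hZ : Measurable Z) (hC : Measurable C) (hW : Measurable W)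
    (hCI : CondIndepFun (MeasurableSpace.comap C inferInstance) hC.comap_le Z W μ) :
    μ.map (fun ω => ((Z ω, C ω), W ω))
      = (μ.map fun ω => (Z ω, C ω)) ⊗ₘ
        ((condDistrib W C μ).comap Prod.snd measurable_snd) := by
  have hZC : Measurable fun ω => (Z ω, C ω) := hZ.prodMk hC
  have hρ : IsProbabilityMeasure (μ.map fun ω => (Z ω, C ω)) :=
    Measure.isProbabilityMeasure_map hZC.aemeasurable
  have hmap : IsProbabilityMeasure (μ.map fun ω => ((Z ω, C ω), W ω)) :=
    Measure.isProbabilityMeasure_map (hZC.prodMk hW).aemeasurable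
  -- key: joint evaluation for arbitrary measurable `S` in the plane
  have key : ∀ (S : Set (ℝ × ℝ)) (B : Set γ), MeasurableSet S → MeasurableSet B →
      μ ((fun ω => (Z ω, C ω)) ⁻¹' S ∩ W ⁻¹' B)
        = ∫⁻ q in S, condDistrib W C μ q.2 B ∂(μ.map fun ω => (Z ω, C ω)) := by
    intro S B hS hB
    have hmk : Measurable fun q : ℝ × ℝ => condDistrib W C μ q.2 B :=
      (Kernel.measurable_coe _ hB).comp measurable_snd
    have hLR : (μ.restrict (W ⁻¹' B)).map (fun ω => (Z ω, C ω))
        = (μ.map fun ω => (Z ω, C ω)).withDensity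
            (fun q => condDistrib W C μ q.2 B) := by
      have hLfin : IsFiniteMeasure ((μ.restrict (W ⁻¹' B)).map (fun ω => (Z ω, C ω))) := by
        constructor
        rw [Measure.map_apply hZC MeasurableSet.univ]
        exact measure_lt_top (μ.restrict (W ⁻¹' B)) _
      refine ext_of_generate_finite _ generateFrom_prod.symm isPiSystem_prod ?_ ?_
      · rintro _ ⟨s₁, hs₁, s₂, hs₂, rfl⟩
        have hs₁ : MeasurableSet s₁ := hs₁
        have hs₂ : MeasurableSet s₂ := hs₂
        rw [Measure.map_apply hZC (hs₁.prod hs₂), Measure.restrict_apply (hZC (hs₁.prod hs₂)),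
          mk_preimage_prod, withDensity_apply _ (hs₁.prod hs₂),
          setLIntegral_map (hs₁.prod hs₂) hmk hZC, mk_preimage_prod]
        exact aux_indep_core hZ hC hW hCI hs₁ hs₂ hB
      · rw [Measure.map_apply hZC MeasurableSet.univ, preimage_univ,
          Measure.restrict_apply MeasurableSet.univ, univ_inter,
          withDensity_apply _ MeasurableSet.univ,
          setLIntegral_map MeasurableSet.univ hmk hZC, preimage_univ]
        have := aux_indep_core hZ hC hW hCI MeasurableSet.univ MeasurableSet.univ hB
        simpa using this
    calc μ ((fun ω => (Z ω, C ω)) ⁻¹' S ∩ W ⁻¹' B)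
        = (μ.restrict (W ⁻¹' B)).map (fun ω => (Z ω, C ω)) S := by
          rw [Measure.map_apply hZC hS, Measure.restrict_apply (hZC hS)]
      _ = ∫⁻ q in S, condDistrib W C μ q.2 B ∂(μ.map fun ω => (Z ω, C ω)) := by
          rw [hLR, withDensity_apply _ hS]
  refine ext_of_generate_finite _ generateFrom_prod.symm isPiSystem_prod ?_ ?_
  · rintro _ ⟨S, hS, B, hB, rfl⟩
    have hS : MeasurableSet S := hS
    have hB : MeasurableSet B := hB
    rw [Measure.map_apply (hZC.prodMk hW) (hS.prod hB), mk_preimage_prod,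
      Measure.compProd_apply_prod hS hB]
    simp_rw [Kernel.comap_apply]
    exact key S B hS hB
  · simp [measure_univ]


end AuxLemmas

/-- Pushing a compProd measure forward by a map acting only on the first coordinate, when the
kernel only depends on the (preserved) second component of the first coordinate. -/
lemma aux_push {γ : Type*} [MeasurableSpace γ]
    (κ : Kernel ℝ γ) [IsMarkovKernel κ] (ρ : Measure (ℝ × ℝ)) [IsProbabilityMeasure ρ]
    {g : ℝ × ℝ → ℝ × ℝ} (hg : Measurable g) (hsnd : ∀ q, (g q).2 = q.2) :
    (ρ ⊗ₘ κ.comap Prod.snd measurable_snd).map (Prod.map g id)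
      = (ρ.map g) ⊗ₘ κ.comap Prod.snd measurable_snd := by
  have h1 : IsProbabilityMeasure (ρ.map g) := Measure.isProbabilityMeasure_map hg.aemeasurable
  have hpm : Measurable (Prod.map g (id : γ → γ)) := hg.prodMap measurable_id
  refine ext_of_generate_finite _ generateFrom_prod.symm isPiSystem_prod ?_ ?_
  · rintro _ ⟨S, hS, B, hB, rfl⟩
    have hS : MeasurableSet S := hS
    have hB : MeasurableSet B := hB
    have hmk : Measurable fun q : ℝ × ℝ => κ q.2 B :=
      (Kernel.measurable_coe _ hB).comp measurable_snd
    have hpre : Prod.map g id ⁻¹' (S ×ˢ B) = (g ⁻¹' S) ×ˢ B := by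
      ext x; simp [Prod.map]
    rw [Measure.map_apply hpm (hS.prod hB), hpre, Measure.compProd_apply_prod (hg hS) hB,
      Measure.compProd_apply_prod hS hB]
    simp_rw [Kernel.comap_apply]
    rw [setLIntegral_map hS hmk hg]
    simp_rw [hsnd]
  · rw [Measure.map_apply hpm MeasurableSet.univ, preimage_univ]
    simp [measure_univ]


section AuxLemmas2

variable {Ω : Type*} [MeasurableSpace Ω] [StandardBorelSpace Ω] [Nonempty Ω]
  {μ : Measure Ω} [IsProbabilityMeasure μ]

/-- Two-step disintegration of the joint law of `(C, (V, Y1))`. -/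
lemma aux_two_step {C V Y1 : Ω → ℝ} (hC : Measurable C) (hV : Measurable V)
    (hY1 : Measurable Y1) :
    μ.map (fun ω => (C ω, (V ω, Y1 ω)))
      = μ.map C ⊗ₘ
        ((condDistrib V C μ) ⊗ₖ (condDistrib Y1 (fun ω => (C ω, V ω)) μ)) := by
  set κV := condDistrib V C μ
  set κ1 := condDistrib Y1 (fun ω => (C ω, V ω)) μ
  have hCV : Measurable fun ω => (C ω, V ω) := hC.prodMk hV
  have hμC : IsProbabilityMeasure (μ.map C) := Measure.isProbabilityMeasure_map hC.aemeasurable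
  have hmap : IsProbabilityMeasure (μ.map (fun ω => (C ω, (V ω, Y1 ω)))) :=
    Measure.isProbabilityMeasure_map (hC.prodMk (hV.prodMk hY1)).aemeasurable
  refine ext_of_generate_finite _ generateFrom_prod.symm isPiSystem_prod ?_ ?_
  · rintro _ ⟨s, hs, B, hB, rfl⟩
    have hs : MeasurableSet s := hs
    have hB : MeasurableSet (B : Set (ℝ × ℝ)) := hB
    -- the target set expressed over `((C,V), Y1)`
    set M : Set ((ℝ × ℝ) × ℝ) := {x | x.1.1 ∈ s ∧ (x.1.2, x.2) ∈ B} with hM_def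
    have hM : MeasurableSet M := by
      have h1 : M = (fun x : (ℝ × ℝ) × ℝ => x.1.1) ⁻¹' s ∩
          (fun x : (ℝ × ℝ) × ℝ => (x.1.2, x.2)) ⁻¹' B := by
        ext x; simp [hM_def]
      rw [h1]
      exact ((measurable_fst.fst) hs).inter
        (((measurable_fst.snd).prodMk measurable_snd) hB)
    have hpre : (fun ω => ((C ω, V ω), Y1 ω)) ⁻¹' M
        = (fun ω => (C ω, (V ω, Y1 ω))) ⁻¹' (s ×ˢ B) := by
      ext ω; simp [hM_def]
    have hsec : Measurable fun q : ℝ × ℝ => κ1 q (Prod.mk q ⁻¹' M) :=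
      Kernel.measurable_kernel_prodMk_left hM
    calc μ.map (fun ω => (C ω, (V ω, Y1 ω))) (s ×ˢ B)
        = μ.map (fun ω => ((C ω, V ω), Y1 ω)) M := by
          rw [Measure.map_apply (hC.prodMk (hV.prodMk hY1)) (hs.prod hB),
            Measure.map_apply (hCV.prodMk hY1) hM, hpre]
      _ = (μ.map (fun ω => (C ω, V ω)) ⊗ₘ κ1) M := by
          rw [aux_map_eq_compProd hCV hY1]
      _ = ((μ.map C ⊗ₘ κV) ⊗ₘ κ1) M := by
          rw [aux_map_eq_compProd hC hV]
      _ = ∫⁻ c, ∫⁻ u, κ1 (c, u) (Prod.mk (c, u) ⁻¹' M) ∂κV c ∂μ.map C := by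
          rw [Measure.compProd_apply hM, Measure.lintegral_compProd hsec]
      _ = ∫⁻ c in s, (κV ⊗ₖ κ1) c B ∂μ.map C := by
          rw [← lintegral_indicator hs]
          refine lintegral_congr fun c => ?_
          by_cases hc : c ∈ s
          · have : ∀ u : ℝ, Prod.mk (c, u) ⁻¹' M = {t | (u, t) ∈ B} := by
              intro u; ext t; simp [hM_def, hc]
            simp only [this, indicator_of_mem hc, Kernel.compProd_apply hB]
            rfl
          · have : ∀ u : ℝ, Prod.mk (c, u) ⁻¹' M = ∅ := by
              intro u; ext t; simp [hM_def, hc]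
            simp [this, indicator_of_notMem hc]
      _ = (μ.map C ⊗ₘ (κV ⊗ₖ κ1)) (s ×ˢ B) := by
          rw [Measure.compProd_apply_prod hs hB]
  · simp [measure_univ]


end AuxLemmas2

/-- Under Assumptions (A1)-(A4), for every `y < γ_C`, every `v` in the support interval `𝒫`
of the propensity score, and every censoring value `c = y + δ > y` in the support of `C`
(almost every conditioning value `(v, c)` w.r.t. the law of `(P(Z,C), C)`):
`ℙ[Y ≤ y, D = 1 ∣ P(Z,C) = v, C = y + δ] = ∫₀^v ℙ[Y*(1) ≤ y ∣ C = y + δ, V = u] du`. -/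
theorem dmtr_integral_rep_treated
    {Ω : Type*} [MeasurableSpace Ω] [StandardBorelSpace Ω] [Nonempty Ω]
    (μ : Measure Ω) [IsProbabilityMeasure μ]
    -- the random variables of the model
    (Y0 Y1 V Z C : Ω → ℝ) (P : ℝ × ℝ → ℝ)
    (hY0 : Measurable Y0) (hY1 : Measurable Y1) (hV : Measurable V)
    (hZ : Measurable Z) (hC : Measurable C) (hP : Measurable P)
    (hY0nn : ∀ ω, 0 ≤ Y0 ω) (hY1nn : ∀ ω, 0 ≤ Y1 ω) (hCnn : ∀ ω, 0 ≤ C ω)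
    (hVrange : ∀ ω, V ω ∈ Set.Ioo (0 : ℝ) 1)
    (hPrange : ∀ p, P p ∈ Set.Icc (0 : ℝ) 1)
    -- the treatment indicator, realized outcome, observed (censored) outcome and
    -- propensity score random variable
    (D : Ω → ℝ) (hD : D = fun ω => if V ω ≤ P (Z ω, C ω) then 1 else 0)
    (Y : Ω → ℝ) (hY : Y = fun ω => min (D ω * Y1 ω + (1 - D ω) * Y0 ω) (C ω))
    (PS : Ω → ℝ) (hPS : PS = fun ω => P (Z ω, C ω))
    -- (A1) random assignment: conditionally on `C`, `Z ⫫ (Y*(0), Y*(1), V)`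
    (hA1 : CondIndepFun (MeasurableSpace.comap C inferInstance) hC.comap_le
      Z (fun ω => (Y0 ω, Y1 ω, V ω)) μ)
    -- (A2) rank: conditionally on `C = c`, the propensity score is absolutely continuous
    -- with support the (nontrivial) interval `𝒫 = [plow, phigh] ⊆ [0,1]`, not depending on `c`
    (plow phigh : ℝ) (h𝒫sub : Set.Icc plow phigh ⊆ Set.Icc (0 : ℝ) 1) (h𝒫lt : plow < phigh)
    (hA2 : ∀ᵐ c ∂(μ.map C),
      condDistrib PS C μ c ≪ volume ∧
      condDistrib PS C μ c (Set.Icc plow phigh)ᶜ = 0 ∧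
      ∀ a b : ℝ, plow ≤ a → a < b → b ≤ phigh → 0 < condDistrib PS C μ c (Set.Ioo a b))
    -- (A3) normalization: conditionally on `C`, `V` is uniform on `(0,1)`
    (hA3 : ∀ᵐ c ∂(μ.map C),
      condDistrib V C μ c = volume.restrict (Set.Ioo (0 : ℝ) 1))
    -- (A4) overlap: `ℙ[D = d ∣ C = c] ∈ (0,1)` for `d ∈ {0,1}`
    (hA4 : ∀ᵐ c ∂(μ.map C),
      (0 < condDistrib D C μ c {(1 : ℝ)} ∧ condDistrib D C μ c {(1 : ℝ)} < 1) ∧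
      (0 < condDistrib D C μ c {(0 : ℝ)} ∧ condDistrib D C μ c {(0 : ℝ)} < 1))
    -- the threshold `y < γ_C`
    (y : ℝ) (hy : ENNReal.ofReal y < gammaSup μ C) :
    ∀ᵐ p ∂(μ.map fun ω => (PS ω, C ω)),
      p.1 ∈ Set.Icc plow phigh → y < p.2 →
      condDistrib (fun ω => (Y ω, D ω)) (fun ω => (PS ω, C ω)) μ p
          {q : ℝ × ℝ | q.1 ≤ y ∧ q.2 = 1}
        = ∫⁻ u in Set.Ioc (0 : ℝ) p.1,
            condDistrib Y1 (fun ω => (C ω, V ω)) μ (p.2, u) (Set.Iic y) := by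
  -- basic measurability
  have hPSm : Measurable PS := by rw [hPS]; exact hP.comp (hZ.prodMk hC)
  have hXC : Measurable fun ω => (PS ω, C ω) := hPSm.prodMk hC
  set W : Ω → ℝ × ℝ := fun ω => (V ω, Y1 ω) with hW_def
  have hW : Measurable W := hV.prodMk hY1
  have hDm : Measurable D := by
    rw [hD]
    exact Measurable.ite (measurableSet_le hV (hP.comp (hZ.prodMk hC)))
      measurable_const measurable_const
  have hYm : Measurable Y := by
    rw [hY]
    exact ((hDm.mul hY1).add ((measurable_const.sub hDm).mul hY0)).min hC
  have hYD : Measurable fun ω => (Y ω, D ω) := hYm.prodMk hDm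
  set ν := μ.map (fun ω => (PS ω, C ω)) with hν_def
  have hνP : IsProbabilityMeasure ν := Measure.isProbabilityMeasure_map hXC.aemeasurable
  set κW := condDistrib W C μ with hκW_def
  set κV := condDistrib V C μ with hκV_def
  set κ1 := condDistrib Y1 (fun ω => (C ω, V ω)) μ with hκ1_def
  -- conditional independence of Z and W given σ(C)
  have hCI : CondIndepFun (MeasurableSpace.comap C inferInstance) hC.comap_le Z W μ := by
    have hψ : Measurable (fun x : ℝ × ℝ × ℝ => (x.2.2, x.2.1)) :=
      (measurable_snd.snd).prodMk (measurable_snd.fst)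
    exact hA1.comp measurable_id hψ
  -- key factorization of the joint law of ((PS, C), W)
  have hkey : μ.map (fun ω => ((PS ω, C ω), W ω)) = ν ⊗ₘ (κW.comap Prod.snd measurable_snd) := by
    have hZC : Measurable fun ω => (Z ω, C ω) := hZ.prodMk hC
    have hρP : IsProbabilityMeasure (μ.map fun ω => (Z ω, C ω)) :=
      Measure.isProbabilityMeasure_map hZC.aemeasurable
    have hg : Measurable (fun q : ℝ × ℝ => (P q, q.2)) := hP.prodMk measurable_snd
    have h3 : (μ.map fun ω => ((Z ω, C ω), W ω)).map
        (Prod.map (fun q : ℝ × ℝ => (P q, q.2)) (id : ℝ × ℝ → ℝ × ℝ))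
        = μ.map (fun ω => ((PS ω, C ω), W ω)) := by
      rw [Measure.map_map (hg.prodMap measurable_id) (hZC.prodMk hW)]
      congr 1
      funext ω
      simp [hPS, Prod.map]
    have h4 : (μ.map fun ω => (Z ω, C ω)).map (fun q : ℝ × ℝ => (P q, q.2)) = ν := by
      rw [Measure.map_map hg hZC, hν_def]
      congr 1
      funext ω
      simp [hPS]
    rw [← h3, aux_indep_compProd hZ hC hW hCI,
      aux_push κW (μ.map fun ω => (Z ω, C ω)) hg (fun q => rfl), h4]
  -- two-step disintegration and uniform conditional law of V
  have hD2 : ∀ᵐ c ∂(μ.map C), (κV ⊗ₖ κ1) c = κW c :=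
    (condDistrib_ae_eq_of_measure_eq_compProd_of_measurable hC hW (aux_two_step hC hV hY1)).symm
  have hsnd : ν.map Prod.snd = μ.map C := by
    rw [hν_def, Measure.map_map measurable_snd hXC]
    rfl
  have hae : ∀ᵐ p ∂ν, (κV ⊗ₖ κ1) p.2 = κW p.2 ∧ κV p.2 = volume.restrict (Ioo (0:ℝ) 1) := by
    have h := hD2.and hA3
    rw [← hsnd] at h
    exact ae_of_ae_map measurable_snd.aemeasurable h
  -- sets
  set A : Set (ℝ × ℝ) := {p | p.1 ∈ Icc plow phigh ∧ y < p.2} with hA_def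
  have hA : MeasurableSet A :=
    (measurable_fst measurableSet_Icc).inter (measurable_snd measurableSet_Ioi)
  set T : Set (ℝ × ℝ) := {q | q.1 ≤ y ∧ q.2 = 1} with hT_def
  have hT : MeasurableSet T :=
    (measurable_fst measurableSet_Iic).inter (measurable_snd (measurableSet_singleton 1))
  set f : ℝ × ℝ → ℝ≥0∞ :=
    fun p => condDistrib (fun ω => (Y ω, D ω)) (fun ω => (PS ω, C ω)) μ p T with hf_def
  set g : ℝ × ℝ → ℝ≥0∞ := fun p => ∫⁻ u in Ioc (0:ℝ) p.1, κ1 (p.2, u) (Iic y) with hg_def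
  have hfm : Measurable f := Kernel.measurable_coe _ hT
  have hgm : Measurable g := by
    set F : (ℝ × ℝ) × ℝ → ℝ≥0∞ := fun x =>
      if x.2 ∈ Ioc (0:ℝ) x.1.1 then κ1 (x.1.2, x.2) (Iic y) else 0 with hF_def
    have hFm : Measurable F := by
      refine Measurable.ite ?_ ?_ measurable_const
      · have : {x : (ℝ × ℝ) × ℝ | x.2 ∈ Ioc (0:ℝ) x.1.1}
            = {x : (ℝ × ℝ) × ℝ | (0:ℝ) < x.2} ∩ {x | x.2 ≤ x.1.1} := by
          ext x; simp [Ioc, and_comm]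
        rw [this]
        exact (measurableSet_lt measurable_const measurable_snd).inter
          (measurableSet_le measurable_snd measurable_fst.fst)
      · exact (Kernel.measurable_coe κ1 measurableSet_Iic).comp
          ((measurable_fst.snd).prodMk measurable_snd)
    have hrw : g = fun p : ℝ × ℝ => ∫⁻ u, F (p, u) ∂volume := by
      funext p
      simp only [hg_def, hF_def]
      rw [← lintegral_indicator measurableSet_Ioc]
      congr 1
      funext u
      simp [indicator_apply]
    rw [hrw]
    exact hFm.lintegral_prod_right'
  -- the core integral identity on subsets of A
  have core : ∀ S : Set (ℝ × ℝ), MeasurableSet S → S ⊆ A →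
      ∫⁻ p in S, f p ∂ν = ∫⁻ p in S, g p ∂ν := by
    intro S hS hSA
    have e1 : ∫⁻ p in S, f p ∂ν
        = μ ((fun ω => (PS ω, C ω)) ⁻¹' S ∩ (fun ω => (Y ω, D ω)) ⁻¹' T) := by
      rw [hν_def, setLIntegral_map hS (Kernel.measurable_coe _ hT) hXC]
      exact setLIntegral_preimage_condDistrib hXC hYD.aemeasurable hT hS
    set M : Set ((ℝ × ℝ) × ℝ × ℝ) := {x | x.1 ∈ S ∧ x.2.1 ≤ x.1.1 ∧ x.2.2 ≤ y} with hM_def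
    have hM : MeasurableSet M := by
      refine (measurable_fst hS).inter (MeasurableSet.inter ?_ ?_)
      · exact measurableSet_le measurable_snd.fst measurable_fst.fst
      · exact measurableSet_le measurable_snd.snd measurable_const
    have e2 : (fun ω => (PS ω, C ω)) ⁻¹' S ∩ (fun ω => (Y ω, D ω)) ⁻¹' T
        = (fun ω => ((PS ω, C ω), W ω)) ⁻¹' M := by
      ext ω
      simp only [mem_inter_iff, mem_preimage, hM_def, hT_def, mem_setOf_eq]
      by_cases hmem : (PS ω, C ω) ∈ S
      · have hyc : y < C ω := (hSA hmem).2
        have hDval : D ω = if V ω ≤ PS ω then 1 else 0 := by rw [hD, hPS]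
        constructor
        · rintro ⟨-, hYy, hD1⟩
          by_cases hv : V ω ≤ PS ω
          · refine ⟨hmem, hv, ?_⟩
            have hYval : Y ω = min (Y1 ω) (C ω) := by
              rw [hY]; simp [hDval, if_pos hv]
            rw [hYval] at hYy
            rcases min_le_iff.mp hYy with h | h
            · exact h
            · exact absurd h (not_le.mpr hyc)
          · rw [hDval, if_neg hv] at hD1
            norm_num at hD1
        · rintro ⟨-, hv, hY1y⟩
          have hD1 : D ω = 1 := by rw [hDval, if_pos hv]
          have hYval : Y ω = min (Y1 ω) (C ω) := by
            rw [hY]; simp [hDval, if_pos (show V ω ≤ PS ω from hv)]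
          exact ⟨hmem, by rw [hYval]; exact min_le_of_left_le hY1y, hD1⟩
      · tauto
    have e3 : μ ((fun ω => ((PS ω, C ω), W ω)) ⁻¹' M)
        = ∫⁻ p in S, κW p.2 (Iic p.1 ×ˢ Iic y) ∂ν := by
      rw [← Measure.map_apply (hXC.prodMk hW) hM, hkey, Measure.compProd_apply hM,
        ← lintegral_indicator hS]
      refine lintegral_congr fun p => ?_
      by_cases hp : p ∈ S
      · have hsec : Prod.mk p ⁻¹' M = Iic p.1 ×ˢ Iic y := by
          ext w; simp [hM_def, hp, Prod.le_def]
        simp [Kernel.comap_apply, hsec, indicator_of_mem hp]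
      · have hsec : Prod.mk p ⁻¹' M = (∅ : Set (ℝ × ℝ)) := by
          ext w; simp [hM_def, hp]
        simp [Kernel.comap_apply, hsec, indicator_of_notMem hp]
    have e4 : ∫⁻ p in S, κW p.2 (Iic p.1 ×ˢ Iic y) ∂ν = ∫⁻ p in S, g p ∂ν := by
      refine lintegral_congr_ae ?_
      filter_upwards [ae_restrict_of_ae hae, ae_restrict_mem hS] with p hp hpS
      have hP01 : p.1 ∈ Icc (0:ℝ) 1 := h𝒫sub (hSA hpS).1
      have hsec : (fun u : ℝ => κ1 (p.2, u) {t | (u, t) ∈ Iic p.1 ×ˢ Iic y})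
          = (Iic p.1).indicator (fun u => κ1 (p.2, u) (Iic y)) := by
        funext u
        by_cases hu : u ≤ p.1
        · have : {t | (u, t) ∈ Iic p.1 ×ˢ Iic y} = Iic y := by
            ext t; simp [hu]
          rw [this, indicator_of_mem (mem_Iic.mpr hu)]
        · have : {t | (u, t) ∈ Iic p.1 ×ˢ Iic y} = (∅ : Set ℝ) := by
            ext t; simp [hu]
          rw [this, indicator_of_notMem (by simpa using hu)]
          simp
      have hseteq : (Iic p.1 ∩ Ioo (0:ℝ) 1 : Set ℝ) =ᵐ[volume] (Ioc (0:ℝ) p.1 : Set ℝ) := by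
        rw [MeasureTheory.ae_eq_set]
        constructor
        · refine measure_mono_null (fun x hx => ?_) (measure_empty (μ := volume))
          exact absurd ⟨hx.1.2.1, hx.1.1⟩ hx.2
        · refine measure_mono_null (fun x hx => ?_) (Real.volume_singleton (a := (1:ℝ)))
          have h1 : x ≤ p.1 := hx.1.2
          have h2 : 0 < x := hx.1.1
          have h3 : ¬(x ≤ p.1 ∧ 0 < x ∧ x < 1) := hx.2
          have hx1 : ¬ x < 1 := fun hlt => h3 ⟨h1, h2, hlt⟩
          have : x = 1 := le_antisymm (h1.trans hP01.2) (not_lt.mp hx1)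
          simp [this]
      rw [← hp.1, Kernel.compProd_apply (measurableSet_Iic.prod measurableSet_Iic),
        lintegral_congr (f := fun u => κ1 (p.2, u) (Prod.mk u ⁻¹' Iic p.1 ×ˢ Iic y)) fun u => congrFun hsec u, lintegral_indicator measurableSet_Iic,
        hp.2, Measure.restrict_restrict measurableSet_Iic, setLIntegral_congr hseteq, hg_def]
    rw [e1, e2, e3, e4]
  -- conclude via a.e. uniqueness on ν.restrict A
  have hmain : f =ᵐ[ν.restrict A] g := by
    refine ae_eq_of_forall_setLIntegral_eq_of_sigmaFinite₀ hfm.aemeasurable hgm.aemeasurable ?_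
    intro s hs _
    rw [Measure.restrict_restrict hs]
    exact core (s ∩ A) (hs.inter hA) inter_subset_right
  have hfin := (ae_restrict_iff' hA).mp hmain
  filter_upwards [hfin] with p hp h1 h2
  exact hp ⟨h1, h2⟩
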